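/- Let p(x,y) = a0*x^3 + 3*a1*x^2*y + 3*a2*x*y^2 + a3*y^3 with integer coefficients, and let p' be its cubic covariant with coefficients c0 = (2*a1^3 - 3*a0*a1*a2 + a0^2*a3)/2, c1 = (a1^2*a2 - 2*a0*a2^2 + a0*a1*a3)/2, c2 = -(a1*a2^2 - 2*a1^2*a3 + a0*a2*a3)/2, c3 = -(2*a2^3 - 3*a1*a2*a3 + a0*a3^2)/2. Then for every γ ∈ SL2(ℤ), (p·γ)' = p'·γ, i.e., the covariant map p ↦ p' is SL2(ℤ)-equivariant. -/
import Mathlib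


/-- The cubic covariant p' of the binary cubic form with coefficients a0,3a1,3a2,a3,
evaluated at (x,y), as a rational number. -/
def cubicCovariant (a0 a1 a2 a3 : ℤ) (x y : ℚ) : ℚ :=
  ((2*a1^3 - 3*a0*a1*a2 + a0^2*a3 : ℤ) : ℚ)/2 * x^3
    + 3*(((a1^2*a2 - 2*a0*a2^2 + a0*a1*a3 : ℤ) : ℚ)/2) * x^2*y
    + 3*(-((a1*a2^2 - 2*a1^2*a3 + a0*a2*a3 : ℤ) : ℚ)/2) * x*y^2
    + (-((2*a2^3 - 3*a1*a2*a3 + a0*a3^2 : ℤ) : ℚ)/2) * y^3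

theorem covariant_equivariance
    (a0 a1 a2 a3 p q r s : ℤ) (hdet : p * s - q * r = 1)
    (b0 b1 b2 b3 : ℤ)
    (hact : ∀ x y : ℤ,
      a0*(p*x+q*y)^3 + 3*a1*(p*x+q*y)^2*(r*x+s*y) + 3*a2*(p*x+q*y)*(r*x+s*y)^2
        + a3*(r*x+s*y)^3
      = b0*x^3 + 3*b1*x^2*y + 3*b2*x*y^2 + b3*y^3) :
    ∀ x y : ℚ,
      cubicCovariant b0 b1 b2 b3 x y
        = cubicCovariant a0 a1 a2 a3 ((p : ℚ)*x + (q : ℚ)*y) ((r : ℚ)*x + (s : ℚ)*y) := by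
  have e0 : b0 = a0*p^3 + 3*a1*p^2*r + 3*a2*p*r^2 + a3*r^3 := by
    linear_combination - hact 1 0
  have e3 : b3 = a0*q^3 + 3*a1*q^2*s + 3*a2*q*s^2 + a3*s^3 := by
    linear_combination - hact 0 1
  have g1 : 6*b1 = 6*(a0*p^2*q + a1*(p^2*s+2*p*q*r) + a2*(2*p*r*s+q*r^2) + a3*r^2*s) := by
    linear_combination - hact 1 1 + hact 1 (-1) - 2*e3
  have g2 : 6*b2 = 6*(a0*p*q^2 + a1*(2*p*q*s+q^2*r) + a2*(p*s^2+2*q*r*s) + a3*r*s^2) := by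
    linear_combination - hact 1 1 - hact 1 (-1) - 2*e0
  have e1 : b1 = a0*p^2*q + a1*(p^2*s+2*p*q*r) + a2*(2*p*r*s+q*r^2) + a3*r^2*s := by
    linarith [g1]
  have e2 : b2 = a0*p*q^2 + a1*(2*p*q*s+q^2*r) + a2*(p*s^2+2*q*r*s) + a3*r*s^2 := by
    linarith [g2]
  have hq : (p:ℚ)*s - (q:ℚ)*r = 1 := by exact_mod_cast hdet
  intro x y
  subst e0 e1 e2 e3
  unfold cubicCovariant
  push_cast
  linear_combination
    ((((p:ℚ)*s - q*r)^2 + ((p:ℚ)*s - q*r) + 1) *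
      ((2*(a1:ℚ)^3 - 3*a0*a1*a2 + a0^2*a3)/2 * ((p:ℚ)*x+(q:ℚ)*y)^3
        + 3*(((a1:ℚ)^2*a2 - 2*a0*a2^2 + a0*a1*a3)/2) * ((p:ℚ)*x+(q:ℚ)*y)^2*((r:ℚ)*x+(s:ℚ)*y)
        + 3*(-((a1:ℚ)*a2^2 - 2*a1^2*a3 + a0*a2*a3)/2) * ((p:ℚ)*x+(q:ℚ)*y)*((r:ℚ)*x+(s:ℚ)*y)^2
        + (-(2*(a2:ℚ)^3 - 3*a1*a2*a3 + a0*a3^2)/2) * ((r:ℚ)*x+(s:ℚ)*y)^3)) * hq
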